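/- Let A be a real symmetric d×d matrix and b ∈ ℝ^d with grade g with respect to A. Suppose for each k ≤ g the MINRES iterate x_k minimizes ‖b − A x‖ over K_k(A,b), with residual r_k = b − A x_k. If b ∉ range(A), then the residual r_g at the final step is nonzero and satisfies A r_g = 0; in particular ⟨r_g, A r_g⟩ = 0, i.e., r_g is a zero-curvature direction. -/

import Mathlib

open Matrix

noncomputable def Krylov {d : ℕ} (A : Matrix (Fin d) (Fin d) ℝ) (b : Fin d → ℝ) (k : ℕ) :
    Submodule ℝ (Fin d → ℝ) :=
  Submodule.span ℝ {v | ∃ i < k, v = (A ^ i).mulVec b}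

noncomputable def enorm {d : ℕ} (v : Fin d → ℝ) : ℝ := Real.sqrt (v ⬝ᵥ v)

lemma dp_self_nonneg {d : ℕ} (v : Fin d → ℝ) : 0 ≤ v ⬝ᵥ v :=
  Finset.sum_nonneg fun i _ => mul_self_nonneg (v i)

lemma Krylov_mono {d : ℕ} (A : Matrix (Fin d) (Fin d) ℝ) (b : Fin d → ℝ) {j k : ℕ}
    (h : j ≤ k) : Krylov A b j ≤ Krylov A b k :=
  Submodule.span_mono fun v ⟨i, hi, hv⟩ => ⟨i, lt_of_lt_of_le hi h, hv⟩

lemma Krylov_map {d : ℕ} (A : Matrix (Fin d) (Fin d) ℝ) (b : Fin d → ℝ) (k : ℕ)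
    {v : Fin d → ℝ} (hv : v ∈ Krylov A b k) : A.mulVec v ∈ Krylov A b (k + 1) := by
  induction hv using Submodule.span_induction with
  | mem v hv =>
      obtain ⟨i, hi, rfl⟩ := hv
      exact Submodule.subset_span ⟨i + 1, by omega, by
        rw [Matrix.mulVec_mulVec, pow_succ']⟩
  | zero => simpa using (Krylov A b (k + 1)).zero_mem
  | add u w _ _ hu hw => rw [Matrix.mulVec_add]; exact Submodule.add_mem _ hu hw
  | smul c u _ hu => rw [Matrix.mulVec_smul]; exact Submodule.smul_mem _ c hu

theorem stmt15 {d g : ℕ} (A : Matrix (Fin d) (Fin d) ℝ) (hA : A.PosSemidef)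
    (b : Fin d → ℝ)
    -- `g` is the grade of `b` with respect to `A`
    (hgrade : ∀ j, Module.finrank ℝ (Krylov A b j) = min j g)
    (x : ℕ → (Fin d → ℝ))
    (hmem : ∀ k ≤ g, x k ∈ Krylov A b k)
    (hmin : ∀ k ≤ g, ∀ y ∈ Krylov A b k,
      _root_.enorm (b - A.mulVec (x k)) ≤ _root_.enorm (b - A.mulVec y))
    (hb : ¬ ∃ y : Fin d → ℝ, A.mulVec y = b)
    (r : Fin d → ℝ) (hr : r = b - A.mulVec (x g)) :
    r ≠ 0 ∧ A.mulVec r = 0 ∧ r ⬝ᵥ A.mulVec r = 0 := by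
  -- g ≥ 1, since otherwise b = 0 = A 0
  have hg1 : 1 ≤ g := by
    by_contra hg
    have hg0 : g = 0 := by omega
    have h1 : Module.finrank ℝ (Krylov A b 1) = 0 := by
      simpa [hg0] using hgrade 1
    have hbmem : b ∈ Krylov A b 1 :=
      Submodule.subset_span ⟨0, by omega, by simp⟩
    have : Krylov A b 1 = ⊥ := Submodule.finrank_eq_zero.mp h1
    rw [this] at hbmem
    have hb0 : b = 0 := (Submodule.mem_bot ℝ).mp hbmem
    exact hb ⟨0, by simp [hb0]⟩
  -- Krylov A b (g+1) = Krylov A b g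
  have hstab : Krylov A b (g + 1) = Krylov A b g := by
    have hle := Krylov_mono A b (Nat.le_succ g)
    have h1 : Module.finrank ℝ (Krylov A b g) = g := by simpa using hgrade g
    have h2 : Module.finrank ℝ (Krylov A b (g + 1)) = g := by
      simpa using hgrade (g + 1)
    exact (Submodule.eq_of_le_of_finrank_le hle (by rw [h1, h2])).symm
  have hinv : ∀ v ∈ Krylov A b g, A.mulVec v ∈ Krylov A b g := fun v hv =>
    hstab ▸ Krylov_map A b g hv
  have hbK : b ∈ Krylov A b g := Submodule.subset_span ⟨0, by omega, by simp⟩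
  have hrK : r ∈ Krylov A b g := by
    rw [hr]; exact Submodule.sub_mem _ hbK (hinv _ (hmem g le_rfl))
  -- orthogonality: r ⬝ᵥ A z = 0 for all z ∈ K_g
  have horth : ∀ z ∈ Krylov A b g, r ⬝ᵥ A.mulVec z = 0 := by
    intro z hz
    set w := A.mulVec z with hw
    set c := r ⬝ᵥ w with hc
    set s := w ⬝ᵥ w with hs
    have hkey : ∀ t : ℝ, 0 ≤ t ^ 2 * s - 2 * t * c := by
      intro t
      have hy : x g + t • z ∈ Krylov A b g :=
        Submodule.add_mem _ (hmem g le_rfl) (Submodule.smul_mem _ t hz)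
      have h := hmin g le_rfl _ hy
      have heq : b - A.mulVec (x g + t • z) = r - t • w := by
        rw [hr, Matrix.mulVec_add, Matrix.mulVec_smul]; abel
      rw [heq, ← hr] at h
      have hle : r ⬝ᵥ r ≤ (r - t • w) ⬝ᵥ (r - t • w) := by
        have h2 := mul_self_le_mul_self (Real.sqrt_nonneg _) h
        simp only [_root_.enorm] at h2
        rwa [Real.mul_self_sqrt (dp_self_nonneg r),
          Real.mul_self_sqrt (dp_self_nonneg _)] at h2
      have hexp : (r - t • w) ⬝ᵥ (r - t • w) = r ⬝ᵥ r - 2 * t * c + t ^ 2 * s := by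
        simp only [sub_dotProduct, dotProduct_sub, smul_dotProduct, dotProduct_smul,
          smul_eq_mul, hc, hs]
        ring_nf
        rw [dotProduct_comm w r]
        ring
      rw [hexp] at hle
      linarith
    have hs0 : 0 ≤ s := dp_self_nonneg w
    have hsp : (0:ℝ) < s + 1 := by linarith
    have h1 := hkey (c / (s + 1))
    have h2 : 0 ≤ c ^ 2 * s - 2 * c ^ 2 * (s + 1) := by
      have h3 := mul_nonneg (le_of_lt (by positivity : (0:ℝ) < (s+1)^2)) h1
      have heq2 : (s+1)^2 * ((c / (s + 1)) ^ 2 * s - 2 * (c / (s + 1)) * c)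
          = c ^ 2 * s - 2 * c ^ 2 * (s + 1) := by
        field_simp
      rwa [heq2] at h3
    have hc2 : c ^ 2 ≤ 0 := by nlinarith [sq_nonneg c]
    have : c = 0 := by nlinarith [sq_nonneg c]
    simpa [hc, hw] using this
  have hcurv : r ⬝ᵥ A.mulVec r = 0 := horth r hrK
  have hAr : A.mulVec r = 0 := by
    have := (hA.dotProduct_mulVec_zero_iff r).mp (by simpa using hcurv)
    simpa using this
  have hrne : r ≠ 0 := by
    intro h0
    apply hb
    exact ⟨x g, by rw [hr] at h0; have := sub_eq_zero.mp h0; exact this.symm⟩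
  exact ⟨hrne, hAr, hcurv⟩
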